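/- Geometric decomposition of a test supermartingale with noise: let (M_t) be a test supermartingale for P (M_t ≥ 0, E^P[M_0] ≤ 1, E^P[M_t | F_{t−1}] ≤ M_{t−1}), Λ_t = log M_t, λ ∈ (0,1], and (ξ_t) a noise process with Λ̃_t = Λ_t + ξ_t where each increment ξ_t − ξ_{t−1} is independent of Λ_t given the past outputs. Define K_t(λ) = log E^P[exp(λ(ξ_t − ξ_{t−1})) | past]. Then E_t = exp(λΛ̃_t − Σ_{i≤t} K_i(λ)) is a test supermartingale for P (hence an e-process). -/

import Mathlib

open MeasureTheory Finset
set_option maxHeartbeats 1000000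

lemma ratio_integrable {Ω : Type*} {m m0 : MeasurableSpace Ω} (hm : m ≤ m0)
    (P : Measure Ω) [IsProbabilityMeasure P]
    {f g : Ω → ℝ} (hf : StronglyMeasurable[m] f) (hfpos : ∀ ω, 0 < f ω)
    (hg : Integrable g P) (hgpos : ∀ ω, 0 ≤ g ω)
    (hle : P[g|m] ≤ᵐ[P] f) :
    Integrable (fun ω => (f ω)⁻¹ * g ω) P := by
  haveI : SigmaFinite (P.trim hm) := inferInstance
  set φ : ℕ → Ω → ℝ := fun n ω => min (f ω)⁻¹ (n : ℝ) with hφ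
  have hφmeas : ∀ n, StronglyMeasurable[m] (φ n) := fun n =>
    (Measurable.min (hf.measurable.inv) measurable_const).stronglyMeasurable
  have hφnonneg : ∀ n ω, 0 ≤ φ n ω := fun n ω =>
    le_min (inv_nonneg.2 (hfpos ω).le) (Nat.cast_nonneg n)
  have hφbd : ∀ n ω, ‖φ n ω‖ ≤ (n : ℝ) := by
    intro n ω
    rw [Real.norm_eq_abs, abs_of_nonneg (hφnonneg n ω)]
    exact min_le_right _ _
  have hφf_le : ∀ n ω, φ n ω * f ω ≤ 1 := by
    intro n ω
    calc φ n ω * f ω ≤ (f ω)⁻¹ * f ω :=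
          mul_le_mul_of_nonneg_right (min_le_left _ _) (hfpos ω).le
      _ = 1 := inv_mul_cancel₀ (hfpos ω).ne'
  have hφf_int : ∀ n, Integrable (fun ω => φ n ω * f ω) P := by
    intro n
    refine Integrable.mono' (integrable_const (1:ℝ)) ?_ ?_
    · exact (((hφmeas n).mul hf).mono hm).aestronglyMeasurable
    · exact Filter.Eventually.of_forall fun ω => by
        rw [Real.norm_eq_abs, abs_of_nonneg (mul_nonneg (hφnonneg n ω) (hfpos ω).le)]
        exact hφf_le n ω
  have hφg_int : ∀ n, Integrable (φ n * g) P := fun n =>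
    hg.bdd_mul (((hφmeas n).mono hm).aestronglyMeasurable) (Filter.Eventually.of_forall (hφbd n))
  have hint_le : ∀ n, ∫ ω, φ n ω * g ω ∂P ≤ 1 := by
    intro n
    have h2 : (P[φ n * g|m]) =ᵐ[P] φ n * P[g|m] :=
      condExp_mul_of_stronglyMeasurable_left (hφmeas n) (hφg_int n) hg
    calc ∫ ω, φ n ω * g ω ∂P = ∫ ω, (P[φ n * g|m]) ω ∂P := (integral_condExp hm).symm
      _ = ∫ ω, (φ n * P[g|m]) ω ∂P := integral_congr_ae h2
      _ ≤ ∫ ω, φ n ω * f ω ∂P := by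
          refine integral_mono_ae ?_ (hφf_int n) ?_
          · exact (integrable_condExp).bdd_mul (((hφmeas n).mono hm).aestronglyMeasurable)
              (Filter.Eventually.of_forall (hφbd n))
          · filter_upwards [hle] with ω hω
            exact mul_le_mul_of_nonneg_left hω (hφnonneg n ω)
      _ ≤ ∫ ω, (1:ℝ) ∂P := integral_mono (hφf_int n) (integrable_const 1)
            (fun ω => hφf_le n ω)
      _ = 1 := by simp
  have hmeas : AEStronglyMeasurable (fun ω => (f ω)⁻¹ * g ω) P :=
    (((hf.measurable.inv).stronglyMeasurable.mono hm).aestronglyMeasurable).mul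
      hg.aestronglyMeasurable
  refine ⟨hmeas, ?_⟩
  rw [hasFiniteIntegral_iff_norm]
  have hsup : ∀ ω, (⨆ n, ENNReal.ofReal (φ n ω * g ω)) = ENNReal.ofReal ((f ω)⁻¹ * g ω) := by
    intro ω
    refine le_antisymm (iSup_le fun n => ENNReal.ofReal_le_ofReal
      (mul_le_mul_of_nonneg_right (min_le_left _ _) (hgpos ω))) ?_
    have : φ (⌈(f ω)⁻¹⌉₊) ω = (f ω)⁻¹ := min_eq_left (Nat.le_ceil _)
    exact le_iSup_of_le (⌈(f ω)⁻¹⌉₊) (by rw [this])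
  have hmono : ∀ ω, Monotone fun n => ENNReal.ofReal (φ n ω * g ω) := by
    intro ω n k hnk
    exact ENNReal.ofReal_le_ofReal (mul_le_mul_of_nonneg_right
      (min_le_min le_rfl (Nat.cast_le.2 hnk)) (hgpos ω))
  calc ∫⁻ ω, ENNReal.ofReal ‖(f ω)⁻¹ * g ω‖ ∂P
      = ∫⁻ ω, ⨆ n, ENNReal.ofReal (φ n ω * g ω) ∂P := by
        refine lintegral_congr fun ω => ?_
        rw [hsup ω, Real.norm_eq_abs,
          abs_of_nonneg (mul_nonneg (inv_nonneg.2 (hfpos ω).le) (hgpos ω))]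
    _ = ⨆ n, ∫⁻ ω, ENNReal.ofReal (φ n ω * g ω) ∂P := by
        refine lintegral_iSup' (fun n => ?_) (Filter.Eventually.of_forall hmono)
        exact (ENNReal.measurable_ofReal.comp_aemeasurable
          ((hφg_int n).aestronglyMeasurable.aemeasurable))
    _ ≤ ⨆ n : ℕ, (1 : ENNReal) := by
        refine iSup_mono fun n => ?_
        have hig : Integrable (fun ω => φ n ω * g ω) P := hφg_int n
        rw [← ofReal_integral_eq_lintegral_ofReal hig
          (Filter.Eventually.of_forall fun ω => mul_nonneg (hφnonneg n ω) (hgpos ω))]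
        exact ENNReal.ofReal_le_one.2 (hint_le n)
    _ < ⊤ := by simp

lemma exp_lam_log_le {lam x : ℝ} (hx : 0 < x) (h0 : 0 ≤ lam) (h1 : lam ≤ 1) :
    Real.exp (lam * Real.log x) ≤ 1 + lam * (x - 1) := by
  have h : Real.exp (lam * Real.log x) = x ^ lam := by
    rw [Real.rpow_def_of_pos hx, mul_comm]
  rw [h]
  have := rpow_one_add_le_one_add_mul_self (s := x - 1) (by linarith) h0 h1
  simpa using this

theorem noisy_test_supermartingale {Ω : Type*} {m0 : MeasurableSpace Ω}
    (P : Measure Ω) [IsProbabilityMeasure P] (ℱ : Filtration ℕ m0)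
    (M : ℕ → Ω → ℝ) (hadM : Adapted ℱ M) (hMpos : ∀ t ω, 0 < M t ω)
    (hMint : ∀ t, Integrable (M t) P) (hM0 : ∫ ω, M 0 ω ∂P ≤ 1)
    (hsuper : ∀ t, P[M (t + 1)|ℱ t] ≤ᵐ[P] M t)
    (lam : ℝ) (hlam0 : 0 < lam) (hlam1 : lam ≤ 1)
    (Λ : ℕ → Ω → ℝ) (hΛ : Λ = fun t ω => Real.log (M t ω))
    (ξ : ℕ → Ω → ℝ) (hadξ : Adapted ℱ ξ) (hξ0 : ξ 0 = fun _ => 0)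
    (K : ℕ → Ω → ℝ) (hK0 : K 0 = fun _ => 0)
    (hKmeas : ∀ t, StronglyMeasurable[ℱ t] (K (t + 1)))
    (hK : ∀ t, (fun ω => Real.exp (K (t + 1) ω)) =ᵐ[P]
      P[fun ω => Real.exp (lam * (ξ (t + 1) ω - ξ t ω))|ℱ t])
    -- the noise increment is independent of the martingale increment given the past:
    (hindep : ∀ t,
      P[fun ω => Real.exp (lam * ((Λ (t + 1) ω - Λ t ω) + (ξ (t + 1) ω - ξ t ω)))|ℱ t]
        =ᵐ[P] fun ω =>
          (P[fun ω' => Real.exp (lam * (Λ (t + 1) ω' - Λ t ω'))|ℱ t]) ω *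
          (P[fun ω' => Real.exp (lam * (ξ (t + 1) ω' - ξ t ω'))|ℱ t]) ω)
    (E : ℕ → Ω → ℝ)
    (hE : E = fun t ω =>
      Real.exp (lam * (Λ t ω + ξ t ω) - ∑ i ∈ Finset.range (t + 1), K i ω))
    (hEint : ∀ t, Integrable (E t) P) :
    Supermartingale E ℱ P ∧ (∫ ω, E 0 ω ∂P ≤ 1) ∧ ∀ t ω, 0 ≤ E t ω := by
  subst hΛ hE
  simp only [] at hindep hEint ⊢
  -- measurability preliminaries
  have hKm : ∀ i t : ℕ, i ≤ t + 1 → StronglyMeasurable[ℱ t] (K i) := by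
    intro i t hit
    match i with
    | 0 => rw [hK0]; exact stronglyMeasurable_const
    | (j+1) => exact (hKmeas j).mono (ℱ.mono (by omega))
  have hcore : ∀ t, StronglyMeasurable[ℱ t]
      (fun ω => lam * (Real.log (M t ω) + ξ t ω) - ∑ i ∈ range (t + 1), K i ω) := by
    intro t
    refine StronglyMeasurable.sub ?_ ?_
    · exact ((Real.measurable_log.comp (hadM t)).stronglyMeasurable.add
        (hadξ t).stronglyMeasurable).const_mul lam
    · exact Finset.stronglyMeasurable_fun_sum _ (fun i hi => hKm i t (by
        simp only [Finset.mem_range] at hi; omega))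
  have hadE : StronglyAdapted ℱ (fun t ω =>
      Real.exp (lam * (Real.log (M t ω) + ξ t ω) - ∑ i ∈ range (t + 1), K i ω)) :=
    fun t => (Real.measurable_exp.comp (hcore t).measurable).stronglyMeasurable
  -- the key one-step inequality
  have key : ∀ t, P[fun ω =>
        Real.exp (lam * (Real.log (M (t+1) ω) + ξ (t+1) ω) - ∑ i ∈ range (t+2), K i ω)|ℱ t]
      ≤ᵐ[P] fun ω =>
        Real.exp (lam * (Real.log (M t ω) + ξ t ω) - ∑ i ∈ range (t+1), K i ω) := by
    intro t
    set a : Ω → ℝ := fun ω => Real.exp (lam * (Real.log (M (t+1) ω) - Real.log (M t ω)))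
      with ha_def
    set b : Ω → ℝ := fun ω => Real.exp (lam * (ξ (t+1) ω - ξ t ω)) with hb_def
    set c : Ω → ℝ := fun ω =>
      Real.exp (lam * (Real.log (M t ω) + ξ t ω) - ∑ i ∈ range (t+1), K i ω - K (t+1) ω)
      with hc_def
    set r : Ω → ℝ := fun ω => (M t ω)⁻¹ * M (t+1) ω with hr_def
    have hrpos : ∀ ω, 0 < r ω := fun ω =>
      mul_pos (inv_pos.2 (hMpos t ω)) (hMpos (t+1) ω)
    have hr_int : Integrable r P :=
      ratio_integrable (ℱ.le t) P (hadM t).stronglyMeasurable (hMpos t) (hMint (t+1))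
        (fun ω => (hMpos (t+1) ω).le) (hsuper t)
    have ha_eq : ∀ ω, a ω = Real.exp (lam * Real.log (r ω)) := by
      intro ω
      simp only [ha_def, hr_def]
      congr 1
      rw [Real.log_mul (inv_ne_zero (hMpos t ω).ne') (hMpos (t+1) ω).ne', Real.log_inv]
      ring
    have ha_bound : ∀ ω, a ω ≤ 1 + lam * (r ω - 1) := by
      intro ω
      rw [ha_eq ω]
      exact exp_lam_log_le (hrpos ω) hlam0.le hlam1
    have hbound_int : Integrable (fun ω => 1 + lam * (r ω - 1)) P :=
      (integrable_const 1).add (((hr_int).sub (integrable_const 1)).const_mul lam)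
    have ha_meas : AEStronglyMeasurable a P := by
      refine (Real.measurable_exp.comp ?_).aestronglyMeasurable
      exact (((Real.measurable_log.comp ((hadM (t+1)).mono (ℱ.le (t+1)) le_rfl)).sub
        (Real.measurable_log.comp ((hadM t).mono (ℱ.le t) le_rfl))).const_mul lam)
    have ha_int : Integrable a P := by
      refine Integrable.mono' hbound_int ha_meas (Filter.Eventually.of_forall fun ω => ?_)
      rw [Real.norm_eq_abs, abs_of_pos (Real.exp_pos _)]
      exact ha_bound ω
    have hb_int : Integrable b P := by
      by_contra hb
      have h0 : P[b|ℱ t] = 0 := condExp_of_not_integrable hb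
      have : (fun ω => Real.exp (K (t+1) ω)) =ᵐ[P] (0 : Ω → ℝ) := (hK t).trans (by rw [h0])
      obtain ⟨ω, hω⟩ := this.exists
      exact (Real.exp_pos (K (t+1) ω)).ne' hω
    have hB : P[b|ℱ t] =ᵐ[P] fun ω => Real.exp (K (t+1) ω) := (hK t).symm
    -- the product of increments
    set g : Ω → ℝ := fun ω => Real.exp
      (lam * ((Real.log (M (t+1) ω) - Real.log (M t ω)) + (ξ (t+1) ω - ξ t ω))) with hg_def
    have hg_eq : g = fun ω => a ω * b ω := by
      funext ω
      rw [ha_def, hb_def, hg_def, ← Real.exp_add]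
      ring_nf
    have hindep' : P[g|ℱ t] =ᵐ[P] fun ω => (P[a|ℱ t]) ω * (P[b|ℱ t]) ω := hindep t
    have hab_int : Integrable (fun ω => a ω * b ω) P := by
      rw [← hg_eq]
      by_contra hg_ni
      have h0 : P[g|ℱ t] = 0 := condExp_of_not_integrable hg_ni
      have hA0 : P[a|ℱ t] =ᵐ[P] (0 : Ω → ℝ) := by
        have h1 : (fun ω => (P[a|ℱ t]) ω * (P[b|ℱ t]) ω) =ᵐ[P] (0 : Ω → ℝ) :=
          hindep'.symm.trans (by rw [h0])
        filter_upwards [h1, hB] with ω h1ω hBω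
        have : (P[a|ℱ t]) ω * Real.exp (K (t+1) ω) = 0 := by rw [← hBω]; exact h1ω
        exact (mul_eq_zero.1 this).resolve_right (Real.exp_pos _).ne'
      have hint0 : ∫ ω, a ω ∂P = 0 := by
        rw [← integral_condExp (ℱ.le t) (f := a), integral_congr_ae hA0]
        simp
      have hpos : 0 < ∫ ω, a ω ∂P := by
        rw [integral_pos_iff_support_of_nonneg (fun ω => (Real.exp_pos _).le) ha_int]
        have : Function.support a = Set.univ :=
          Set.eq_univ_of_forall fun ω => (Real.exp_pos _).ne'
        rw [this]
        simp
      exact hpos.ne' hint0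
    -- P[a | ℱ t] ≤ 1
    have hrinv : StronglyMeasurable[ℱ t] (fun ω => (M t ω)⁻¹) :=
      ((hadM t).inv).stronglyMeasurable
    have hr_int' : Integrable ((fun ω => (M t ω)⁻¹) * M (t+1)) P := hr_int
    have hpull : P[(fun ω => (M t ω)⁻¹) * M (t+1)|ℱ t]
        =ᵐ[P] (fun ω => (M t ω)⁻¹) * P[M (t+1)|ℱ t] :=
      condExp_mul_of_stronglyMeasurable_left hrinv hr_int' (hMint (t+1))
    have hr_le : P[r|ℱ t] ≤ᵐ[P] fun _ => (1:ℝ) := by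
      filter_upwards [hpull, hsuper t] with ω h1 h2
      have : (P[r|ℱ t]) ω = (M t ω)⁻¹ * (P[M (t+1)|ℱ t]) ω := h1
      rw [this]
      calc (M t ω)⁻¹ * (P[M (t+1)|ℱ t]) ω ≤ (M t ω)⁻¹ * M t ω :=
            mul_le_mul_of_nonneg_left h2 (inv_nonneg.2 (hMpos t ω).le)
        _ = 1 := inv_mul_cancel₀ (hMpos t ω).ne'
    have hbound_eq : (fun ω => 1 + lam * (r ω - 1))
        = (fun _ => (1:ℝ)) + lam • (r - fun _ => (1:ℝ)) := by
      funext ω; simp [smul_eq_mul]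
    have hcond_bound : P[fun ω => 1 + lam * (r ω - 1)|ℱ t]
        =ᵐ[P] fun ω => 1 + lam * ((P[r|ℱ t]) ω - 1) := by
      rw [hbound_eq]
      refine (condExp_add (integrable_const 1) ((hr_int.sub (integrable_const 1)).smul lam) (ℱ t)).trans ?_
      have h1 : P[(fun _ => (1:ℝ))|ℱ t] = fun _ => (1:ℝ) := condExp_const (μ := P) (ℱ.le t) (1:ℝ)
      have h2 : P[lam • (r - fun _ => (1:ℝ))|ℱ t] =ᵐ[P] lam • P[r - fun _ => (1:ℝ)|ℱ t] :=
        condExp_smul lam _ (ℱ t)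
      have h3 : P[r - fun _ => (1:ℝ)|ℱ t] =ᵐ[P] P[r|ℱ t] - P[(fun _ => (1:ℝ))|ℱ t] :=
        condExp_sub hr_int (integrable_const 1) (ℱ t)
      filter_upwards [h2, h3] with ω h2ω h3ω
      have h1ω : (P[(fun _ => (1:ℝ))|ℱ t]) ω = 1 := by rw [h1]
      simp only [Pi.add_apply, Pi.smul_apply, Pi.sub_apply, smul_eq_mul] at h2ω h3ω ⊢
      rw [h1ω, h2ω, h3ω, h1ω]
    have hA_le : P[a|ℱ t] ≤ᵐ[P] fun _ => (1:ℝ) := by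
      have hmono : P[a|ℱ t] ≤ᵐ[P] P[fun ω => 1 + lam * (r ω - 1)|ℱ t] :=
        condExp_mono ha_int hbound_int (Filter.Eventually.of_forall ha_bound)
      filter_upwards [hmono, hcond_bound, hr_le] with ω h1 h2 h3
      calc (P[a|ℱ t]) ω ≤ 1 + lam * ((P[r|ℱ t]) ω - 1) := by rw [← h2]; exact h1
        _ ≤ 1 + lam * (1 - 1) := by
            have : (P[r|ℱ t]) ω ≤ 1 := h3
            nlinarith
        _ = 1 := by ring
    -- decompose E (t+1) and E t
    have hc_meas : StronglyMeasurable[ℱ t] c := by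
      refine (Real.measurable_exp.comp ?_).stronglyMeasurable
      exact ((hcore t).measurable).sub (hKm (t+1) t le_rfl).measurable
    have hEsucc : (fun ω =>
        Real.exp (lam * (Real.log (M (t+1) ω) + ξ (t+1) ω) - ∑ i ∈ range (t+2), K i ω))
        = c * fun ω => a ω * b ω := by
      funext ω
      simp only [Pi.mul_apply, hc_def, ha_def, hb_def, ← Real.exp_add,
        Finset.sum_range_succ]
      ring_nf
    have hEt : (fun ω =>
        Real.exp (lam * (Real.log (M t ω) + ξ t ω) - ∑ i ∈ range (t+1), K i ω))
        = fun ω => c ω * Real.exp (K (t+1) ω) := by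
      funext ω
      rw [hc_def, ← Real.exp_add]
      ring_nf
    have hcab_int : Integrable (c * fun ω => a ω * b ω) P := by
      rw [← hEsucc]; exact hEint (t+1)
    have hmain : P[c * fun ω => a ω * b ω|ℱ t] =ᵐ[P] c * P[fun ω => a ω * b ω|ℱ t] :=
      condExp_mul_of_stronglyMeasurable_left hc_meas hcab_int hab_int
    have hprod : P[fun ω => a ω * b ω|ℱ t] =ᵐ[P]
        fun ω => (P[a|ℱ t]) ω * Real.exp (K (t+1) ω) := by
      have h1 : P[fun ω => a ω * b ω|ℱ t] = P[g|ℱ t] := by rw [hg_eq]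
      rw [h1]
      filter_upwards [hindep', hB] with ω h1ω h2ω
      rw [h1ω, h2ω]
    rw [hEsucc, hEt]
    filter_upwards [hmain, hprod, hA_le, condExp_nonneg (μ := P) (m := ℱ t) (f := a)
      (Filter.Eventually.of_forall fun ω => (Real.exp_pos _).le)] with ω h1 h2 h3 h4
    calc (P[c * fun ω => a ω * b ω|ℱ t]) ω = c ω * (P[fun ω => a ω * b ω|ℱ t]) ω := h1
      _ = c ω * ((P[a|ℱ t]) ω * Real.exp (K (t+1) ω)) := by rw [h2]
      _ ≤ c ω * (1 * Real.exp (K (t+1) ω)) := by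
          refine mul_le_mul_of_nonneg_left ?_ (Real.exp_pos _).le
          exact mul_le_mul_of_nonneg_right h3 (Real.exp_pos _).le
      _ = c ω * Real.exp (K (t+1) ω) := by ring
  refine ⟨supermartingale_nat hadE hEint key, ?_, fun t ω => (Real.exp_pos _).le⟩
  -- initial bound
  have hE0 : (fun ω => Real.exp (lam * (Real.log (M 0 ω) + ξ 0 ω) - ∑ i ∈ range 1, K i ω))
      = fun ω => Real.exp (lam * Real.log (M 0 ω)) := by
    funext ω
    rw [Finset.sum_range_one, congrFun hξ0 ω, congrFun hK0 ω]
    ring_nf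
  have hb_int0 : Integrable (fun ω => 1 + lam * (M 0 ω - 1)) P :=
    (integrable_const 1).add (((hMint 0).sub (integrable_const 1)).const_mul lam)
  calc ∫ ω, Real.exp (lam * (Real.log (M 0 ω) + ξ 0 ω) - ∑ i ∈ range 1, K i ω) ∂P
      = ∫ ω, Real.exp (lam * Real.log (M 0 ω)) ∂P := by rw [← hE0]
    _ ≤ ∫ ω, (1 + lam * (M 0 ω - 1)) ∂P := by
        refine integral_mono ?_ hb_int0 ?_
        · have := hEint 0
          rwa [hE0] at this  -- may need adjusting
        · exact fun ω => exp_lam_log_le (hMpos 0 ω) hlam0.le hlam1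
    _ = 1 + lam * ((∫ ω, M 0 ω ∂P) - 1) := by
        have h1 : ∫ ω, (1 + lam * (M 0 ω - 1)) ∂P
            = (∫ _ω, (1:ℝ) ∂P) + ∫ ω, lam * (M 0 ω - 1) ∂P :=
          integral_add (integrable_const 1) (((hMint 0).sub (integrable_const 1)).const_mul lam)
        rw [h1, integral_const, integral_const_mul,
          integral_sub (hMint 0) (integrable_const 1), integral_const]
        simp
    _ ≤ 1 + lam * (1 - 1) := by nlinarith [hM0]
    _ = 1 := by ring
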